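/- An abelian topological group is duoseparable if and only if it is separable. -/

import Mathlib

open Pointwise

theorem stmt14 (X : Type*) [CommGroup X] [TopologicalSpace X] [IsTopologicalGroup X] :
    (∃ S : Set X, S.Countable ∧ ∀ U ∈ nhds (1 : X), S * U * S = Set.univ) ↔
      TopologicalSpace.SeparableSpace X := by
  constructor
  · rintro ⟨S, hS, hU⟩
    have hSS : (S * S).Countable := by
      rw [← Set.image2_mul]; exact hS.image2 hS _
    refine ⟨⟨S * S, hSS, ?_⟩⟩
    rw [dense_iff_inter_open]
    rintro V hV ⟨x, hx⟩
    have h1 : x⁻¹ • V ∈ nhds (1 : X) := by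
      have := hV.mem_nhds hx
      simpa using smul_mem_nhds_smul x⁻¹ this
    have h2 : (x⁻¹ • V)⁻¹ ∈ nhds (1 : X) := by
      simpa using inv_mem_nhds_one X h1
    have h3 := hU _ h2
    rw [mul_right_comm] at h3
    have hxmem : x ∈ S * S * (x⁻¹ • V)⁻¹ := h3 ▸ Set.mem_univ x
    obtain ⟨t, ht, u, hu, htu⟩ := hxmem
    refine ⟨t, ?_, ht⟩
    have hu' : u⁻¹ ∈ x⁻¹ • V := Set.mem_inv.mp hu
    have : x * u⁻¹ ∈ V := by
      rcases hu' with ⟨v, hv, hvu⟩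
      simp only [smul_eq_mul] at hvu
      have : v = x * u⁻¹ := by rw [← hvu]; group
      rwa [← this]
    have ht' : t = x * u⁻¹ := by
      rw [← htu]; group
    rwa [← ht'] at this
  · rintro ⟨⟨D, hD, hdense⟩⟩
    refine ⟨D ∪ {1}, hD.union (Set.countable_singleton 1), fun U hU => ?_⟩
    ext x
    simp only [Set.mem_univ, iff_true]
    have hUinv : U⁻¹ ∈ nhds (1 : X) := inv_mem_nhds_one X hU
    have hx : x • U⁻¹ ∈ nhds x := by
      simpa using smul_mem_nhds_smul x hUinv
    have := hdense x
    rw [mem_closure_iff_nhds] at this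
    obtain ⟨d, hd2, hd1⟩ := this _ hx
    obtain ⟨u, hu, hud⟩ := hd2
    simp only [smul_eq_mul] at hud
    have hxe : x = d * u⁻¹ := by rw [← hud]; group
    refine ⟨d * u⁻¹, ?_, 1, Set.mem_union_right _ rfl, by simp [hxe]⟩
    exact Set.mul_mem_mul (Set.mem_union_left _ hd1) (by simpa using hu)
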